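/- Let A be a residuated lattice, F a filter of A, and C a ∨-closed subset of A. If m is an ω_F(C)-minimal prime filter of A, then m ∩ C = ∅. -/
import Mathlib


class ResiduatedLattice (α : Type*) extends Lattice α, CommMonoid α, BoundedOrder α where
  rimp : α → α → α
  one_eq_top : (1 : α) = ⊤
  adjunction : ∀ x y z : α, x * y ≤ z ↔ x ≤ rimp y z

variable {α : Type*} [ResiduatedLattice α]

/-- A filter of a residuated lattice: nonempty, closed under `⊙` and upward closed. -/
def IsFilter (F : Set α) : Prop :=
  F.Nonempty ∧ (∀ x ∈ F, ∀ y ∈ F, x * y ∈ F) ∧ ∀ x ∈ F, ∀ y : α, x ≤ y → y ∈ F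

/-- A prime filter: a proper filter such that `x ⊔ y ∈ P` implies `x ∈ P` or `y ∈ P`. -/
def IsPrimeFilter (P : Set α) : Prop :=
  IsFilter P ∧ P ≠ Set.univ ∧ ∀ x y : α, x ⊔ y ∈ P → x ∈ P ∨ y ∈ P

/-- A `∨`-closed subset: nonempty and closed under join. -/
def IsJoinClosed (C : Set α) : Prop :=
  C.Nonempty ∧ ∀ x ∈ C, ∀ y ∈ C, x ⊔ y ∈ C

/-- The filter generated by a set. -/
def filterGen (X : Set α) : Set α := ⋂₀ {G : Set α | IsFilter G ∧ X ⊆ G}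

/-- An `X`-minimal prime filter: prime, contains `X`, minimal among primes containing `X`. -/
def IsMinPrimeOver (X P : Set α) : Prop :=
  IsPrimeFilter P ∧ X ⊆ P ∧ ∀ Q : Set α, IsPrimeFilter Q → X ⊆ Q → Q ⊆ P → Q = P

/-- `ω_F(X) = {a | x ∨ a ∈ F for some x ∈ X}`. -/
def omegaF (F X : Set α) : Set α := {a : α | ∃ x ∈ X, x ⊔ a ∈ F}

/-- The coannihilator `(F : x) = {a | x ∨ a ∈ F}`. -/
def coann (F : Set α) (x : α) : Set α := {a : α | x ⊔ a ∈ F}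

/-- `D_F(H) = {a | x ∨ a ∈ F for some x ∉ H}`, the set of `F`-divisors of `H`. -/
def divisorsF (F H : Set α) : Set α := {a : α | ∃ x ∉ H, x ⊔ a ∈ F}

/-- A lattice ideal: nonempty, closed under join and downward closed. -/
def IsLatticeIdeal (I : Set α) : Prop :=
  I.Nonempty ∧ (∀ x ∈ I, ∀ y ∈ I, x ⊔ y ∈ I) ∧ ∀ x y : α, x ≤ y → y ∈ I → x ∈ I

/-- The lattice ideal generated by a set. -/
def idealGen (X : Set α) : Set α := ⋂₀ {I : Set α | IsLatticeIdeal I ∧ X ⊆ I}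

/-- An `ω_F`-filter: a filter of the form `ω_F(I)` for some lattice ideal `I`. -/
def IsOmegaFilter (F H : Set α) : Prop :=
  IsFilter H ∧ ∃ I : Set α, IsLatticeIdeal I ∧ H = omegaF F I

section Aux

lemma rl_le_one (a : α) : a ≤ 1 := by
  rw [ResiduatedLattice.one_eq_top]; exact le_top

lemma rl_mul_le_mul_right {a b : α} (h : a ≤ b) (c : α) : a * c ≤ b * c := by
  rw [ResiduatedLattice.adjunction]
  exact le_trans h ((ResiduatedLattice.adjunction b c (b * c)).1 le_rfl)

lemma rl_mul_le_mul_left (a : α) {b c : α} (h : b ≤ c) : a * b ≤ a * c := by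
  rw [mul_comm a b, mul_comm a c]; exact rl_mul_le_mul_right h a

lemma rl_mul_le_left (a b : α) : a * b ≤ a := by
  have := rl_mul_le_mul_left a (rl_le_one b)
  simpa using this

lemma rl_mul_le_right (a b : α) : a * b ≤ b := by
  rw [mul_comm]; exact rl_mul_le_left b a

lemma rl_mul_sup (a b c : α) : a * (b ⊔ c) = a * b ⊔ a * c := by
  apply le_antisymm
  · rw [mul_comm, ResiduatedLattice.adjunction]
    refine sup_le ?_ ?_
    · rw [← ResiduatedLattice.adjunction, mul_comm]; exact le_sup_left
    · rw [← ResiduatedLattice.adjunction, mul_comm]; exact le_sup_right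
  · exact sup_le (rl_mul_le_mul_left a le_sup_left) (rl_mul_le_mul_left a le_sup_right)

lemma rl_pow_sup_le (x y : α) : ∀ n m : ℕ, (x ⊔ y) ^ (n + m) ≤ x ^ n ⊔ y ^ m := by
  intro n
  induction n with
  | zero =>
    intro m
    have h0 : (x : α) ^ 0 = ⊤ := by rw [pow_zero, ResiduatedLattice.one_eq_top]
    calc (x ⊔ y) ^ (0 + m) ≤ ⊤ := le_top
      _ ≤ x ^ 0 ⊔ y ^ m := by rw [h0]; exact le_sup_left
  | succ n ih =>
    intro m
    induction m with
    | zero =>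
      have h0 : (y : α) ^ 0 = ⊤ := by rw [pow_zero, ResiduatedLattice.one_eq_top]
      calc (x ⊔ y) ^ (n + 1 + 0) ≤ ⊤ := le_top
        _ ≤ x ^ (n + 1) ⊔ y ^ 0 := by rw [h0]; exact le_sup_right
    | succ m ihm =>
      have key : (x ⊔ y) ^ (n + 1 + (m + 1)) = (x ⊔ y) * (x ⊔ y) ^ (n + 1 + m) := by
        rw [← pow_succ']
        ring_nf
      have h1 : (x ⊔ y) ^ (n + 1 + m) ≤ x ^ (n + 1) ⊔ y ^ m := ihm
      have h2 : (x ⊔ y) ^ (n + 1 + m) ≤ x ^ n ⊔ y ^ (m + 1) := by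
        have := ih (m + 1)
        have e : n + (m + 1) = n + 1 + m := by omega
        rwa [e] at this
      rw [key, mul_comm, rl_mul_sup]
      refine sup_le ?_ ?_
      · calc (x ⊔ y) ^ (n + 1 + m) * x ≤ (x ^ n ⊔ y ^ (m + 1)) * x :=
              rl_mul_le_mul_right h2 x
          _ = x ^ n * x ⊔ y ^ (m + 1) * x := by rw [mul_comm, rl_mul_sup, mul_comm x (x^n), mul_comm x (y^(m+1))]
          _ ≤ x ^ (n + 1) ⊔ y ^ (m + 1) := by
              refine sup_le ?_ ?_
              · rw [← pow_succ]; exact le_sup_left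
              · exact le_trans (rl_mul_le_left _ _) le_sup_right
      · calc (x ⊔ y) ^ (n + 1 + m) * y ≤ (x ^ (n + 1) ⊔ y ^ m) * y :=
              rl_mul_le_mul_right h1 y
          _ = x ^ (n + 1) * y ⊔ y ^ m * y := by rw [mul_comm, rl_mul_sup, mul_comm y (x^(n+1)), mul_comm y (y^m)]
          _ ≤ x ^ (n + 1) ⊔ y ^ (m + 1) := by
              refine sup_le ?_ ?_
              · exact le_trans (rl_mul_le_left _ _) le_sup_left
              · rw [← pow_succ]; exact le_sup_right

lemma rl_top_mem {F : Set α} (hF : IsFilter F) : (⊤ : α) ∈ F := by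
  obtain ⟨⟨f, hf⟩, _, hup⟩ := hF
  exact hup f hf ⊤ le_top

lemma rl_pow_mem {F : Set α} (hF : IsFilter F) {a : α} (ha : a ∈ F) (n : ℕ) : a ^ n ∈ F := by
  induction n with
  | zero => rw [pow_zero, ResiduatedLattice.one_eq_top]; exact rl_top_mem hF
  | succ n ih => rw [pow_succ]; exact hF.2.1 _ ih _ ha

lemma rl_omega_isFilter {F C : Set α} (hF : IsFilter F) (hC : IsJoinClosed C) :
    IsFilter (omegaF F C) := by
  obtain ⟨c0, hc0⟩ := hC.1
  refine ⟨⟨⊤, c0, hc0, by simpa using rl_top_mem hF⟩, ?_, ?_⟩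
  · rintro a ⟨x, hx, hxa⟩ b ⟨y, hy, hyb⟩
    refine ⟨x ⊔ y, hC.2 x hx y hy, ?_⟩
    have hmul : (x ⊔ a) * (y ⊔ b) ∈ F := hF.2.1 _ hxa _ hyb
    refine hF.2.2 _ hmul _ ?_
    have e : (x ⊔ a) * (y ⊔ b) = x * y ⊔ x * b ⊔ (a * y ⊔ a * b) := by
      rw [mul_comm, rl_mul_sup, mul_comm (y ⊔ b) x, mul_comm (y ⊔ b) a,
        rl_mul_sup, rl_mul_sup]
    rw [e]
    refine sup_le (sup_le ?_ ?_) (sup_le ?_ ?_)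
    · exact le_trans (rl_mul_le_left x y) (le_trans le_sup_left le_sup_left)
    · exact le_trans (rl_mul_le_left x b) (le_trans le_sup_left le_sup_left)
    · exact le_trans (rl_mul_le_right a y) (le_trans le_sup_right le_sup_left)
    · exact le_sup_right
  · rintro a ⟨x, hx, hxa⟩ b hab
    exact ⟨x, hx, hF.2.2 _ hxa _ (sup_le_sup_left hab x)⟩

/-- Prime filter separation: a filter disjoint from a join-closed down-set extends to a
prime filter still disjoint from it. -/
lemma rl_exists_prime_disjoint {G J : Set α} (hG : IsFilter G) (hJne : J.Nonempty)
    (hJjoin : ∀ x ∈ J, ∀ y ∈ J, x ⊔ y ∈ J) (hJdown : ∀ x y : α, x ≤ y → y ∈ J → x ∈ J)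
    (hdisj : ∀ j ∈ J, j ∉ G) :
    ∃ Q : Set α, IsPrimeFilter Q ∧ G ⊆ Q ∧ ∀ j ∈ J, j ∉ Q := by
  set S : Set (Set α) := {Q | IsFilter Q ∧ G ⊆ Q ∧ ∀ j ∈ J, j ∉ Q} with hS
  have hchain : ∀ c ⊆ S, IsChain (· ⊆ ·) c → c.Nonempty →
      ∃ ub ∈ S, ∀ s ∈ c, s ⊆ ub := by
    intro c hcS hchain ⟨Q0, hQ0⟩
    refine ⟨⋃₀ c, ⟨⟨?_, ?_, ?_⟩, ?_, ?_⟩, fun s hs => Set.subset_sUnion_of_mem hs⟩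
    · obtain ⟨q, hq⟩ := (hcS hQ0).1.1
      exact ⟨q, Q0, hQ0, hq⟩
    · rintro x ⟨Qx, hQx, hxQ⟩ y ⟨Qy, hQy, hyQ⟩
      rcases hchain.total hQx hQy with h | h
      · exact ⟨Qy, hQy, (hcS hQy).1.2.1 x (h hxQ) y hyQ⟩
      · exact ⟨Qx, hQx, (hcS hQx).1.2.1 x hxQ y (h hyQ)⟩
    · rintro x ⟨Qx, hQx, hxQ⟩ y hxy
      exact ⟨Qx, hQx, (hcS hQx).1.2.2 x hxQ y hxy⟩
    · exact fun g hg => ⟨Q0, hQ0, (hcS hQ0).2.1 hg⟩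
    · rintro j hj ⟨Qx, hQx, hjQ⟩
      exact (hcS hQx).2.2 j hj hjQ
  obtain ⟨Q, hGQ, hQS, hQmax⟩ := zorn_subset_nonempty S hchain G ⟨hG, le_refl G, hdisj⟩
  obtain ⟨hQF, hGQ', hQJ⟩ := hQS
  obtain ⟨j0, hj0⟩ := hJne
  refine ⟨Q, ⟨hQF, ?_, ?_⟩, hGQ', hQJ⟩
  · intro h
    exact hQJ j0 hj0 (h ▸ Set.mem_univ j0)
  · -- primality
    intro x y hxy
    by_contra hcon
    push_neg at hcon
    obtain ⟨hxQ, hyQ⟩ := hcon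
    -- filter generated by Q and x
    have hgen : ∀ z : α, z ∉ Q →
        ∃ q ∈ Q, ∃ n : ℕ, ∃ j ∈ J, q * z ^ n ≤ j := by
      intro z hzQ
      set Qz : Set α := {w | ∃ q ∈ Q, ∃ n : ℕ, q * z ^ n ≤ w} with hQz
      have hQzF : IsFilter Qz := by
        refine ⟨⟨⊤, ?_⟩, ?_, ?_⟩
        · obtain ⟨q, hq⟩ := hQF.1
          exact ⟨q, hq, 0, le_top⟩
        · rintro a ⟨q, hq, n, hn⟩ b ⟨q', hq', n', hn'⟩
          refine ⟨q * q', hQF.2.1 _ hq _ hq', n + n', ?_⟩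
          rw [pow_add, mul_mul_mul_comm]
          exact le_trans (rl_mul_le_mul_right hn _) (rl_mul_le_mul_left _ hn')
        · rintro a ⟨q, hq, n, hn⟩ b hab
          exact ⟨q, hq, n, le_trans hn hab⟩
      have hQsub : Q ⊆ Qz := by
        intro q hq
        exact ⟨q, hq, 0, by simp [rl_le_one q]⟩
      have hzQz : z ∈ Qz := by
        obtain ⟨q, hq⟩ := hQF.1
        refine ⟨q, hq, 1, ?_⟩
        rw [pow_one]
        exact rl_mul_le_right q z
      have hQzS : Qz ∉ S := by
        intro hmem
        exact hzQ (hQmax hmem hQsub hzQz)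
      have : ¬ ∀ j ∈ J, j ∉ Qz := by
        intro hall
        exact hQzS ⟨hQzF, fun g hg => hQsub (hGQ' hg), hall⟩
      push_neg at this
      obtain ⟨j, hjJ, q, hq, n, hn⟩ := this
      exact ⟨q, hq, n, j, hjJ, hn⟩
    obtain ⟨qx, hqx, n, jx, hjx, hnx⟩ := hgen x hxQ
    obtain ⟨qy, hqy, mm, jy, hjy, hny⟩ := hgen y hyQ
    have hkey : qx * qy * (x ⊔ y) ^ (n + mm) ≤ jx ⊔ jy := by
      calc qx * qy * (x ⊔ y) ^ (n + mm)
          ≤ qx * qy * (x ^ n ⊔ y ^ mm) := rl_mul_le_mul_left _ (rl_pow_sup_le x y n mm)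
        _ = qx * qy * x ^ n ⊔ qx * qy * y ^ mm := rl_mul_sup _ _ _
        _ ≤ qx * x ^ n ⊔ qy * y ^ mm := by
            refine sup_le_sup ?_ ?_
            · exact rl_mul_le_mul_right (rl_mul_le_left qx qy) _
            · exact rl_mul_le_mul_right (rl_mul_le_right qx qy) _
        _ ≤ jx ⊔ jy := sup_le_sup hnx hny
    have hmemQ : qx * qy * (x ⊔ y) ^ (n + mm) ∈ Q :=
      hQF.2.1 _ (hQF.2.1 _ hqx _ hqy) _ (rl_pow_mem hQF hxy _)
    have : jx ⊔ jy ∈ Q := hQF.2.2 _ hmemQ _ hkey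
    exact hQJ _ (hJjoin _ hjx _ hjy) this

end Aux

/-- Proposition 3.16: if `m` is an `ω_F(C)`-minimal prime filter, then
`m ∩ C = ∅`. -/
theorem stmt_11 (F C m : Set α) (hF : IsFilter F) (hC : IsJoinClosed C)
    (hm : IsMinPrimeOver (omegaF F C) m) :
    m ∩ C = ∅ := by
  by_contra hne
  obtain ⟨c, hcm, hcC⟩ := Set.nonempty_iff_ne_empty.2 hne
  obtain ⟨⟨hmF, hmProper, hmPrime⟩, hGm, hmin⟩ := hm
  set G : Set α := omegaF F C with hG
  have hGF : IsFilter G := rl_omega_isFilter hF hC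
  -- the ideal J
  set J : Set α := {z | ∃ t : α, t ∉ m ∧ z ≤ c ⊔ t} with hJ
  have hex : ∃ t : α, t ∉ m := by
    by_contra h
    push_neg at h
    exact hmProper (Set.eq_univ_of_forall h)
  obtain ⟨t0, ht0⟩ := hex
  have hJne : J.Nonempty := ⟨c ⊔ t0, t0, ht0, le_rfl⟩
  have hJjoin : ∀ x ∈ J, ∀ y ∈ J, x ⊔ y ∈ J := by
    rintro x ⟨t, ht, hxt⟩ y ⟨s, hs, hys⟩
    refine ⟨t ⊔ s, ?_, ?_⟩
    · intro h
      rcases hmPrime t s h with h' | h' <;> [exact ht h'; exact hs h']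
    · refine sup_le (le_trans hxt ?_) (le_trans hys ?_)
      · exact sup_le_sup_left le_sup_left c
      · exact sup_le_sup_left le_sup_right c
  have hJdown : ∀ x y : α, x ≤ y → y ∈ J → x ∈ J := by
    rintro x y hxy ⟨t, ht, hyt⟩
    exact ⟨t, ht, le_trans hxy hyt⟩
  have hdisj : ∀ j ∈ J, j ∉ G := by
    rintro j ⟨t, ht, hjt⟩ ⟨y, hyC, hyjF⟩
    apply ht
    apply hGm
    refine ⟨y ⊔ c, hC.2 y hyC c hcC, ?_⟩
    refine hF.2.2 _ hyjF _ ?_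
    calc y ⊔ j ≤ y ⊔ (c ⊔ t) := sup_le_sup_left hjt y
      _ = y ⊔ c ⊔ t := (sup_assoc y c t).symm
  obtain ⟨Q, hQprime, hGQ, hQJ⟩ := rl_exists_prime_disjoint hGF hJne hJjoin hJdown hdisj
  have hQm : Q ⊆ m := by
    intro q hq
    by_contra hqm
    exact hQJ q ⟨q, hqm, le_sup_right⟩ hq
  have hQeq : Q = m := hmin Q hQprime hGQ hQm
  have hcJ : c ∈ J := ⟨t0, ht0, le_sup_left⟩
  exact hQJ c hcJ (hQeq ▸ hcm)
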